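/- Let γ > 2, λ > 2, T_M > 1, fix 0 < S_min ≤ S_max < 1, let (Ω, μ) be a finite measure space, and let C₀ > 0. There exists C' > 0, depending only on γ, λ, T_M, S_min, S_max, μ(Ω) and C₀, such that for every ε ∈ (0, 1/4], every S_D ∈ [S_min, S_max], and every measurable function S : Ω → ℝ with ∫_Ω E_ε(S(x)) dμ(x) ≤ C₀, one has: ∫_Ω (min(S,0))² dμ ≤ C' ε^γ, μ({S ≤ 0}) ≤ C' ε^{γ-2}, ∫_Ω (max(S−1,0))² dμ ≤ C' ε^λ, and μ({S ≥ 1}) ≤ C' ε^{λ-2}. -/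
import Mathlib


open MeasureTheory

/-- The cutting function `Z(s) = min(max(s,0),1)`. -/
noncomputable def Z (s : ℝ) : ℝ := min (max s 0) 1

/-- The regularized cutting function `Z_ε(s) = (1−2ε)Z(s) + ε`. -/
noncomputable def Zeps (ε s : ℝ) : ℝ := (1 - 2 * ε) * Z s + ε

/-- The integrand `h_ε(ξ) = Z_ε(ξ)^{-γ} + T_M (1 − Z_ε(ξ))^{-λ}` of the regularized entropy. -/
noncomputable def heps (γ lam TM ε ξ : ℝ) : ℝ :=
  Zeps ε ξ ^ (-γ) + TM * (1 - Zeps ε ξ) ^ (-lam)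

/-- The regularized entropy with base point `S_D`. -/
noncomputable def Eeps (γ lam TM ε SD s : ℝ) : ℝ :=
  s * (∫ ξ in SD..s, heps γ lam TM ε ξ) - ∫ ξ in SD..s, ξ * heps γ lam TM ε ξ

/-! ### Auxiliary lemmas -/

lemma Z_nonneg (s : ℝ) : 0 ≤ Z s := le_min (le_max_right s 0) zero_le_one

lemma Z_le_one (s : ℝ) : Z s ≤ 1 := min_le_right _ _

lemma Z_of_nonpos {s : ℝ} (hs : s ≤ 0) : Z s = 0 := by
  unfold Z; rw [max_eq_right hs, min_eq_left zero_le_one]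

lemma Z_of_mem {s : ℝ} (h0 : 0 ≤ s) (h1 : s ≤ 1) : Z s = s := by
  unfold Z; rw [max_eq_left h0, min_eq_left h1]

lemma Z_of_one_le {s : ℝ} (hs : 1 ≤ s) : Z s = 1 := by
  unfold Z; rw [max_eq_left (le_trans zero_le_one hs), min_eq_right hs]

lemma Zeps_ge {ε : ℝ} (hε2 : ε ≤ 1/2) (s : ℝ) : ε ≤ Zeps ε s := by
  have := Z_nonneg s
  unfold Zeps; nlinarith

lemma Zeps_le {ε : ℝ} (hε : 0 < ε) (hε2 : ε ≤ 1/2) (s : ℝ) : Zeps ε s ≤ 1 - ε := by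
  have h1 := Z_nonneg s
  have h2 := Z_le_one s
  unfold Zeps; nlinarith

lemma Zeps_pos {ε : ℝ} (hε : 0 < ε) (hε2 : ε ≤ 1/2) (s : ℝ) : 0 < Zeps ε s :=
  lt_of_lt_of_le hε (Zeps_ge hε2 s)

lemma one_sub_Zeps_pos {ε : ℝ} (hε : 0 < ε) (hε2 : ε ≤ 1/2) (s : ℝ) : 0 < 1 - Zeps ε s := by
  have := Zeps_le hε hε2 s; linarith

lemma heps_pos (γ lam : ℝ) {TM ε : ℝ} (hTM : 0 < TM) (hε : 0 < ε) (hε2 : ε ≤ 1/2) (ξ : ℝ) :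
    0 < heps γ lam TM ε ξ :=
  add_pos (Real.rpow_pos_of_pos (Zeps_pos hε hε2 ξ) _)
    (mul_pos hTM (Real.rpow_pos_of_pos (one_sub_Zeps_pos hε hε2 ξ) _))

lemma Z_continuous : Continuous Z := (continuous_id.max continuous_const).min continuous_const

lemma Zeps_continuous (ε : ℝ) : Continuous (Zeps ε) :=
  (continuous_const.mul Z_continuous).add continuous_const

lemma heps_continuous (γ lam TM : ℝ) {ε : ℝ} (hε : 0 < ε) (hε2 : ε ≤ 1/2) :
    Continuous (heps γ lam TM ε) := by
  apply Continuous.add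
  · exact (Zeps_continuous ε).rpow_const fun ξ => Or.inl (Zeps_pos hε hε2 ξ).ne'
  · exact continuous_const.mul
      ((continuous_const.sub (Zeps_continuous ε)).rpow_const
        fun ξ => Or.inl (one_sub_Zeps_pos hε hε2 ξ).ne')

lemma Eeps_eq (γ lam TM SD : ℝ) {ε : ℝ} (hε : 0 < ε) (hε2 : ε ≤ 1/2) (s : ℝ) :
    Eeps γ lam TM ε SD s = ∫ ξ in SD..s, (s - ξ) * heps γ lam TM ε ξ := by
  have hc := heps_continuous γ lam TM hε hε2
  have i1 : IntervalIntegrable (fun ξ : ℝ => s * heps γ lam TM ε ξ) volume SD s :=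
    (continuous_const.mul hc).intervalIntegrable _ _
  have i2 : IntervalIntegrable (fun ξ : ℝ => ξ * heps γ lam TM ε ξ) volume SD s :=
    (continuous_id'.mul hc).intervalIntegrable _ _
  unfold Eeps
  rw [← intervalIntegral.integral_const_mul, ← intervalIntegral.integral_sub i1 i2]
  simp only [← sub_mul]

lemma Eeps_eq' (γ lam TM SD : ℝ) {ε : ℝ} (hε : 0 < ε) (hε2 : ε ≤ 1/2) (s : ℝ) :
    Eeps γ lam TM ε SD s = ∫ ξ in s..SD, (ξ - s) * heps γ lam TM ε ξ := by
  rw [Eeps_eq γ lam TM SD hε hε2 s, intervalIntegral.integral_symm,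
    ← intervalIntegral.integral_neg]
  congr 1; funext ξ; ring

lemma Eeps_nonneg (γ lam SD : ℝ) {TM ε : ℝ} (hTM : 0 < TM) (hε : 0 < ε) (hε2 : ε ≤ 1/2)
    (s : ℝ) : 0 ≤ Eeps γ lam TM ε SD s := by
  rcases le_total SD s with h | h
  · rw [Eeps_eq γ lam TM SD hε hε2 s]
    apply intervalIntegral.integral_nonneg h
    intro u hu
    exact mul_nonneg (by linarith [hu.2]) (heps_pos γ lam hTM hε hε2 u).le
  · rw [Eeps_eq' γ lam TM SD hε hε2 s]
    apply intervalIntegral.integral_nonneg h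
    intro u hu
    exact mul_nonneg (by linarith [hu.1]) (heps_pos γ lam hTM hε hε2 u).le

lemma integral_lb {h g : ℝ → ℝ} (hc : Continuous h) (gc : Continuous g)
    {s SD a b : ℝ} (hsa : s ≤ a) (hab : a ≤ b) (hbSD : b ≤ SD)
    (hpos : ∀ ξ ∈ Set.Ioc s SD, 0 ≤ (ξ - s) * h ξ)
    (hg : ∀ ξ ∈ Set.Icc a b, g ξ ≤ (ξ - s) * h ξ) :
    (∫ ξ in a..b, g ξ) ≤ ∫ ξ in s..SD, (ξ - s) * h ξ := by
  have hfc : Continuous fun ξ => (ξ - s) * h ξ := (continuous_id.sub continuous_const).mul hc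
  refine le_trans (intervalIntegral.integral_mono_on hab (gc.intervalIntegrable _ _)
    (hfc.intervalIntegrable _ _) hg) ?_
  exact intervalIntegral.integral_mono_interval hsa hab hbSD
    ((ae_restrict_iff' measurableSet_Ioc).mpr (Filter.Eventually.of_forall hpos))
    (hfc.intervalIntegrable _ _)

lemma integral_lb_right {h g : ℝ → ℝ} (hc : Continuous h) (gc : Continuous g)
    {s SD a b : ℝ} (hSDa : SD ≤ a) (hab : a ≤ b) (hbs : b ≤ s)
    (hpos : ∀ ξ ∈ Set.Ioc SD s, 0 ≤ (s - ξ) * h ξ)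
    (hg : ∀ ξ ∈ Set.Icc a b, g ξ ≤ (s - ξ) * h ξ) :
    (∫ ξ in a..b, g ξ) ≤ ∫ ξ in SD..s, (s - ξ) * h ξ := by
  have hfc : Continuous fun ξ => (s - ξ) * h ξ := (continuous_const.sub continuous_id).mul hc
  refine le_trans (intervalIntegral.integral_mono_on hab (gc.intervalIntegrable _ _)
    (hfc.intervalIntegrable _ _) hg) ?_
  exact intervalIntegral.integral_mono_interval hSDa hab hbs
    ((ae_restrict_iff' measurableSet_Ioc).mpr (Filter.Eventually.of_forall hpos))
    (hfc.intervalIntegrable _ _)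

lemma integral_linear (a b s : ℝ) : (∫ ξ in a..b, (ξ - s)) = (b^2 - a^2)/2 - (b - a)*s := by
  have i1 : IntervalIntegrable (fun ξ : ℝ => ξ) volume a b :=
    continuous_id'.intervalIntegrable _ _
  have i2 : IntervalIntegrable (fun _ : ℝ => s) volume a b :=
    continuous_const.intervalIntegrable _ _
  rw [intervalIntegral.integral_sub i1 i2, integral_id, intervalIntegral.integral_const]
  simp only [smul_eq_mul]

lemma integral_linear' (a b s : ℝ) : (∫ ξ in a..b, (s - ξ)) = (b - a)*s - (b^2 - a^2)/2 := by
  have i1 : IntervalIntegrable (fun _ : ℝ => s) volume a b :=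
    continuous_const.intervalIntegrable _ _
  have i2 : IntervalIntegrable (fun ξ : ℝ => ξ) volume a b :=
    continuous_id'.intervalIntegrable _ _
  rw [intervalIntegral.integral_sub i1 i2, integral_id, intervalIntegral.integral_const]
  simp only [smul_eq_mul]

/-- Bound A: pointwise control of the square of the negative part. -/
lemma boundA (γ lam : ℝ) {TM SD ε : ℝ} (hγ : 0 < γ) (hTM : 0 < TM)
    (hε : 0 < ε) (hε2 : ε ≤ 1/2) (hSD : 0 ≤ SD) (s : ℝ) :
    (min s 0)^2 ≤ 2 * ε ^ γ * Eeps γ lam TM ε SD s := by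
  have hεγ : (0:ℝ) < ε ^ γ := Real.rpow_pos_of_pos hε γ
  rcases le_or_gt s 0 with hs | hs
  · have key : ε^(-γ) * (s^2/2) ≤ Eeps γ lam TM ε SD s := by
      rw [Eeps_eq' γ lam TM SD hε hε2 s]
      have hcalc : ε^(-γ) * (s^2/2) = ∫ ξ in s..0, ε^(-γ) * (ξ - s) := by
        rw [intervalIntegral.integral_const_mul, integral_linear]; ring
      rw [hcalc]
      refine integral_lb (heps_continuous γ lam TM hε hε2)
        (by continuity) le_rfl hs hSD ?_ ?_
      · intro ξ hξ
        exact mul_nonneg (by linarith [hξ.1]) (heps_pos γ lam hTM hε hε2 ξ).le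
      · intro ξ hξ
        have hZ : Zeps ε ξ = ε := by unfold Zeps; rw [Z_of_nonpos hξ.2]; ring
        have hterm : 0 ≤ TM * (1 - ε) ^ (-lam) :=
          (mul_pos hTM (Real.rpow_pos_of_pos (by linarith : (0:ℝ) < 1 - ε) _)).le
        have : ε^(-γ) ≤ heps γ lam TM ε ξ := by
          unfold heps; rw [hZ]; linarith
        rw [mul_comm]
        exact mul_le_mul_of_nonneg_left this (by linarith [hξ.1])
    rw [min_eq_left hs]
    have hinv : ε ^ (-γ) = (ε ^ γ)⁻¹ := Real.rpow_neg hε.le γ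
    rw [hinv] at key
    have h2 : s^2/2 ≤ ε^γ * Eeps γ lam TM ε SD s := by
      have := mul_le_mul_of_nonneg_left key hεγ.le
      rwa [← mul_assoc, mul_inv_cancel₀ hεγ.ne', one_mul] at this
    linarith
  · rw [min_eq_right hs.le]
    have := Eeps_nonneg γ lam SD hTM hε hε2 s
    nlinarith

/-- Bound B: lower bound on the entropy for nonpositive `s`. -/
lemma boundB (γ lam : ℝ) {TM SD Smin ε : ℝ} (hγ : 0 < γ) (hTM : 0 < TM)
    (h0 : 0 < Smin) (h1 : Smin ≤ SD) (hS1 : Smin ≤ 1)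
    (hε : 0 < ε) (hε2 : ε ≤ 1/2) {s : ℝ} (hs : s ≤ 0) :
    Smin^2/2 * 2^(-γ) * ε^(2-γ) ≤ Eeps γ lam TM ε SD s := by
  have key : (∫ ξ in (0:ℝ)..(ε*Smin), (2*ε)^(-γ) * ξ) ≤ Eeps γ lam TM ε SD s := by
    rw [Eeps_eq' γ lam TM SD hε hε2 s]
    refine integral_lb (heps_continuous γ lam TM hε hε2) (by continuity)
      hs (by nlinarith) (by nlinarith) ?_ ?_
    · intro ξ hξ
      exact mul_nonneg (by linarith [hξ.1]) (heps_pos γ lam hTM hε hε2 ξ).le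
    · intro ξ hξ
      obtain ⟨hξ0, hξa⟩ := hξ
      have hξ1 : ξ ≤ 1 := by nlinarith
      have hZ : Z ξ = ξ := Z_of_mem hξ0 hξ1
      have hZe : Zeps ε ξ ≤ 2*ε := by unfold Zeps; rw [hZ]; nlinarith
      have hrp : (2*ε)^(-γ) ≤ Zeps ε ξ ^ (-γ) :=
        Real.rpow_le_rpow_of_nonpos (Zeps_pos hε hε2 ξ) hZe (by linarith)
      have hterm : 0 ≤ TM * (1 - Zeps ε ξ) ^ (-lam) :=
        (mul_pos hTM (Real.rpow_pos_of_pos (one_sub_Zeps_pos hε hε2 ξ) _)).le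
      have hh : (2*ε)^(-γ) ≤ heps γ lam TM ε ξ := by unfold heps; linarith
      have hle : ξ ≤ ξ - s := by linarith
      calc (2*ε)^(-γ) * ξ ≤ heps γ lam TM ε ξ * (ξ - s) :=
            mul_le_mul hh hle hξ0 (heps_pos γ lam hTM hε hε2 ξ).le
        _ = (ξ - s) * heps γ lam TM ε ξ := mul_comm _ _
  refine le_trans (le_of_eq ?_) key
  rw [intervalIntegral.integral_const_mul, integral_id,
    Real.mul_rpow (by norm_num) hε.le,
    show (2-γ) = (2:ℝ) + (-γ) by ring, Real.rpow_add hε, Real.rpow_two]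
  ring

/-- Bound C: pointwise control of the square of the excess above 1. -/
lemma boundC (γ lam : ℝ) {TM SD ε : ℝ} (hlam : 0 < lam) (hTM : 1 ≤ TM)
    (hε : 0 < ε) (hε2 : ε ≤ 1/2) (hSD : SD ≤ 1) (s : ℝ) :
    (max (s-1) 0)^2 ≤ 2 * ε ^ lam * Eeps γ lam TM ε SD s := by
  have hTM0 : (0:ℝ) < TM := by linarith
  have hεl : (0:ℝ) < ε ^ lam := Real.rpow_pos_of_pos hε lam
  rcases le_or_gt 1 s with hs | hs
  · have key : ε^(-lam) * ((s-1)^2/2) ≤ Eeps γ lam TM ε SD s := by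
      rw [Eeps_eq γ lam TM SD hε hε2 s]
      have hcalc : ε^(-lam) * ((s-1)^2/2) = ∫ ξ in (1:ℝ)..s, ε^(-lam) * (s - ξ) := by
        rw [intervalIntegral.integral_const_mul, integral_linear']; ring
      rw [hcalc]
      refine integral_lb_right (heps_continuous γ lam TM hε hε2)
        (by continuity) hSD hs le_rfl ?_ ?_
      · intro ξ hξ
        exact mul_nonneg (by linarith [hξ.2]) (heps_pos γ lam hTM0 hε hε2 ξ).le
      · intro ξ hξ
        have hZ : Zeps ε ξ = 1 - ε := by unfold Zeps; rw [Z_of_one_le hξ.1]; ring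
        have hterm : 0 ≤ Zeps ε ξ ^ (-γ) :=
          (Real.rpow_pos_of_pos (Zeps_pos hε hε2 ξ) _).le
        have hεp : (0:ℝ) < ε^(-lam) := Real.rpow_pos_of_pos hε _
        have : ε^(-lam) ≤ heps γ lam TM ε ξ := by
          unfold heps; rw [hZ]
          have h1 : (1:ℝ) - (1 - ε) = ε := by ring
          rw [h1]
          have hterm' : 0 ≤ (1 - ε) ^ (-γ) :=
            (Real.rpow_pos_of_pos (by linarith : (0:ℝ) < 1 - ε) _).le
          nlinarith [mul_le_mul_of_nonneg_right hTM hεp.le]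
        rw [mul_comm]
        exact mul_le_mul_of_nonneg_left this (by linarith [hξ.2])
    rw [max_eq_left (by linarith)]
    have hinv : ε ^ (-lam) = (ε ^ lam)⁻¹ := Real.rpow_neg hε.le lam
    rw [hinv] at key
    have h2 : (s-1)^2/2 ≤ ε^lam * Eeps γ lam TM ε SD s := by
      have := mul_le_mul_of_nonneg_left key hεl.le
      rwa [← mul_assoc, mul_inv_cancel₀ hεl.ne', one_mul] at this
    linarith
  · rw [max_eq_right (by linarith)]
    have := Eeps_nonneg γ lam SD hTM0 hε hε2 s
    nlinarith

/-- Bound D: lower bound on the entropy for `s ≥ 1`. -/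
lemma boundD (γ lam : ℝ) {TM SD Smax ε : ℝ} (hlam : 0 < lam) (hTM : 1 ≤ TM)
    (hSmax0 : 0 < Smax) (hSmax : Smax < 1) (hSD : SD ≤ Smax)
    (hε : 0 < ε) (hε2 : ε ≤ 1/2) {s : ℝ} (hs : 1 ≤ s) :
    (1-Smax)^2/2 * 2^(-lam) * ε^(2-lam) ≤ Eeps γ lam TM ε SD s := by
  have hTM0 : (0:ℝ) < TM := by linarith
  set a : ℝ := 1 - ε*(1-Smax) with ha
  have haSmax : Smax ≤ a := by rw [ha]; nlinarith
  have key : (∫ ξ in a..(1:ℝ), (2*ε)^(-lam) * (1 - ξ)) ≤ Eeps γ lam TM ε SD s := by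
    rw [Eeps_eq γ lam TM SD hε hε2 s]
    refine integral_lb_right (heps_continuous γ lam TM hε hε2)
      (by continuity) (le_trans hSD haSmax) (by rw [ha]; nlinarith) hs ?_ ?_
    · intro ξ hξ
      exact mul_nonneg (by linarith [hξ.2]) (heps_pos γ lam hTM0 hε hε2 ξ).le
    · intro ξ hξ
      obtain ⟨hξa, hξ1⟩ := hξ
      have hξ0 : 0 ≤ ξ := by rw [ha] at hξa; nlinarith
      have hZ : Z ξ = ξ := Z_of_mem hξ0 hξ1
      have hZe : 1 - Zeps ε ξ ≤ 2*ε := by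
        unfold Zeps; rw [hZ]; rw [ha] at hξa; nlinarith
      have hrp : (2*ε)^(-lam) ≤ (1 - Zeps ε ξ) ^ (-lam) :=
        Real.rpow_le_rpow_of_nonpos (one_sub_Zeps_pos hε hε2 ξ) hZe (by linarith)
      have hterm : 0 ≤ Zeps ε ξ ^ (-γ) :=
        (Real.rpow_pos_of_pos (Zeps_pos hε hε2 ξ) _).le
      have hrp0 : (0:ℝ) < (1 - Zeps ε ξ) ^ (-lam) :=
        Real.rpow_pos_of_pos (one_sub_Zeps_pos hε hε2 ξ) _
      have hh : (2*ε)^(-lam) ≤ heps γ lam TM ε ξ := by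
        unfold heps; nlinarith [mul_le_mul_of_nonneg_right hTM hrp0.le]
      have hle : 1 - ξ ≤ s - ξ := by linarith
      have h1ξ : 0 ≤ 1 - ξ := by linarith
      calc (2*ε)^(-lam) * (1 - ξ) ≤ heps γ lam TM ε ξ * (s - ξ) :=
            mul_le_mul hh hle h1ξ (heps_pos γ lam hTM0 hε hε2 ξ).le
        _ = (s - ξ) * heps γ lam TM ε ξ := mul_comm _ _
  refine le_trans (le_of_eq ?_) key
  rw [intervalIntegral.integral_const_mul, integral_linear',
    Real.mul_rpow (by norm_num) hε.le,
    show (2-lam) = (2:ℝ) + (-lam) by ring, Real.rpow_add hε, Real.rpow_two, ha]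
  ring

/-- Proposition 8.1 of the paper (quantitative version): a uniform bound on the
integrated regularized entropy implies smallness of the negative part of `S`
and of its excess above `1`, with explicit powers of `ε`. -/
theorem entropy_bound_controls_overshoot
    (γ lam TM : ℝ) (hγ : 2 < γ) (hlam : 2 < lam) (hTM : 1 < TM)
    (Smin Smax : ℝ) (h0 : 0 < Smin) (h1 : Smin ≤ Smax) (h2 : Smax < 1)
    (Ω : Type*) [MeasurableSpace Ω] (μ : Measure Ω) [IsFiniteMeasure μ]
    (C0 : ℝ) (hC0 : 0 < C0) :
    ∃ C' > (0:ℝ),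
      ∀ ε ∈ Set.Ioc (0:ℝ) (1/4), ∀ SD ∈ Set.Icc Smin Smax, ∀ S : Ω → ℝ,
        Measurable S →
        Integrable (fun x => Eeps γ lam TM ε SD (S x)) μ →
        (∫ x, Eeps γ lam TM ε SD (S x) ∂μ) ≤ C0 →
        (∫⁻ x, ENNReal.ofReal ((min (S x) 0) ^ 2) ∂μ) ≤ ENNReal.ofReal (C' * ε ^ γ) ∧
        μ {x | S x ≤ 0} ≤ ENNReal.ofReal (C' * ε ^ (γ - 2)) ∧
        (∫⁻ x, ENNReal.ofReal ((max (S x - 1) 0) ^ 2) ∂μ) ≤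
          ENNReal.ofReal (C' * ε ^ lam) ∧
        μ {x | 1 ≤ S x} ≤ ENNReal.ofReal (C' * ε ^ (lam - 2)) := by
  have hTM0 : (0:ℝ) < TM := by linarith
  set c1 : ℝ := Smin^2/2 * 2^(-γ) with hc1def
  set c2 : ℝ := (1-Smax)^2/2 * 2^(-lam) with hc2def
  have hc1 : 0 < c1 :=
    mul_pos (div_pos (pow_pos h0 2) two_pos) (Real.rpow_pos_of_pos two_pos _)
  have hc2 : 0 < c2 :=
    mul_pos (div_pos (pow_pos (by linarith : (0:ℝ) < 1 - Smax) 2) two_pos)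
      (Real.rpow_pos_of_pos two_pos _)
  refine ⟨2*C0 + C0/c1 + C0/c2, by positivity, ?_⟩
  intro ε hεm SD hSDm S hSmeas hSint hSle
  obtain ⟨hε, hε4⟩ := hεm
  have hε2 : ε ≤ 1/2 := by linarith
  obtain ⟨hSD1, hSD2⟩ := hSDm
  have hSD0 : 0 ≤ SD := by linarith
  have hSDle1 : SD ≤ 1 := by linarith
  have hEnn : ∀ x, 0 ≤ Eeps γ lam TM ε SD (S x) := fun x =>
    Eeps_nonneg γ lam SD hTM0 hε hε2 (S x)
  have hlint : (∫⁻ x, ENNReal.ofReal (Eeps γ lam TM ε SD (S x)) ∂μ) =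
      ENNReal.ofReal (∫ x, Eeps γ lam TM ε SD (S x) ∂μ) :=
    (ofReal_integral_eq_lintegral_ofReal hSint (Filter.Eventually.of_forall hEnn)).symm
  have hlintC0 : (∫⁻ x, ENNReal.ofReal (Eeps γ lam TM ε SD (S x)) ∂μ)
      ≤ ENNReal.ofReal C0 := by
    rw [hlint]; exact ENNReal.ofReal_le_ofReal hSle
  have haemeas : AEMeasurable (fun x => ENNReal.ofReal (Eeps γ lam TM ε SD (S x))) μ :=
    ENNReal.measurable_ofReal.comp_aemeasurable hSint.aestronglyMeasurable.aemeasurable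
  have hIE : (∫ x, Eeps γ lam TM ε SD (S x) ∂μ) ≤ C0 := hSle
  have hIEnn : 0 ≤ ∫ x, Eeps γ lam TM ε SD (S x) ∂μ :=
    integral_nonneg hEnn
  -- generic Markov-type step
  have markov : ∀ (c p : ℝ), 0 < c → (∀ x' : ℝ, True) → ∀ (T : Set Ω),
      (∀ x ∈ T, c * ε^(2-p) ≤ Eeps γ lam TM ε SD (S x)) →
      μ T ≤ ENNReal.ofReal ((C0/c) * ε^(p-2)) := by
    intro c p hc _ T hT
    have hap : 0 < c * ε^(2-p) := mul_pos hc (Real.rpow_pos_of_pos hε _)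
    have hsub : T ⊆ {x | ENNReal.ofReal (c * ε^(2-p)) ≤
        ENNReal.ofReal (Eeps γ lam TM ε SD (S x))} := fun x hx =>
      ENNReal.ofReal_le_ofReal (hT x hx)
    have hmark : ENNReal.ofReal (c * ε^(2-p)) * μ T ≤ ENNReal.ofReal C0 := by
      calc ENNReal.ofReal (c * ε^(2-p)) * μ T
          ≤ ENNReal.ofReal (c * ε^(2-p)) *
            μ {x | ENNReal.ofReal (c * ε^(2-p)) ≤
              ENNReal.ofReal (Eeps γ lam TM ε SD (S x))} :=
            mul_le_mul_right (measure_mono hsub) _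
        _ ≤ ∫⁻ x, ENNReal.ofReal (Eeps γ lam TM ε SD (S x)) ∂μ :=
            mul_meas_ge_le_lintegral₀ haemeas _
        _ ≤ ENNReal.ofReal C0 := hlintC0
    have hdiv : μ T ≤ ENNReal.ofReal C0 / ENNReal.ofReal (c * ε^(2-p)) :=
      (ENNReal.le_div_iff_mul_le (Or.inl (ENNReal.ofReal_pos.mpr hap).ne')
        (Or.inl ENNReal.ofReal_ne_top)).mpr (by rwa [mul_comm])
    refine hdiv.trans (le_of_eq ?_)
    rw [← ENNReal.ofReal_div_of_pos hap]
    congr 1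
    have hprod : ε^(2-p) * ε^(p-2) = 1 := by
      rw [← Real.rpow_add hε]; norm_num
    rw [div_eq_iff hap.ne']
    have hstep : C0 / c * ε ^ (p - 2) * (c * ε ^ (2 - p)) =
        C0 / c * c * (ε ^ (2 - p) * ε ^ (p - 2)) := by ring
    rw [hstep, div_mul_cancel₀ _ hc.ne', hprod, mul_one]
  refine ⟨?_, ?_, ?_, ?_⟩
  · -- negative part squared
    calc (∫⁻ x, ENNReal.ofReal ((min (S x) 0) ^ 2) ∂μ)
        ≤ ∫⁻ x, ENNReal.ofReal (2 * ε^γ * Eeps γ lam TM ε SD (S x)) ∂μ :=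
          lintegral_mono fun x => ENNReal.ofReal_le_ofReal
            (boundA γ lam (by linarith) hTM0 hε hε2 hSD0 (S x))
      _ = ENNReal.ofReal (∫ x, 2 * ε^γ * Eeps γ lam TM ε SD (S x) ∂μ) :=
          (ofReal_integral_eq_lintegral_ofReal (hSint.const_mul _)
            (Filter.Eventually.of_forall fun x => mul_nonneg
              (by positivity) (hEnn x))).symm
      _ ≤ ENNReal.ofReal ((2*C0 + C0/c1 + C0/c2) * ε ^ γ) := by
          apply ENNReal.ofReal_le_ofReal
          rw [integral_const_mul]
          have hεγ : (0:ℝ) < ε ^ γ := Real.rpow_pos_of_pos hε γ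
          have : 2 * ε^γ * (∫ x, Eeps γ lam TM ε SD (S x) ∂μ) ≤ 2 * ε^γ * C0 :=
            mul_le_mul_of_nonneg_left hIE (by positivity)
          have hd1 : 0 < C0/c1 := div_pos hC0 hc1
          have hd2 : 0 < C0/c2 := div_pos hC0 hc2
          nlinarith
  · -- measure of {S ≤ 0}
    have := markov c1 γ hc1 (fun _ => trivial) {x | S x ≤ 0}
      (fun x hx => boundB γ lam (by linarith) hTM0 h0 hSD1 (by linarith) hε hε2 hx)
    refine this.trans (ENNReal.ofReal_le_ofReal ?_)
    have hεp : (0:ℝ) ≤ ε ^ (γ-2) := (Real.rpow_pos_of_pos hε _).le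
    have hd1 : 0 < C0/c1 := div_pos hC0 hc1
    have hd2 : 0 < C0/c2 := div_pos hC0 hc2
    nlinarith
  · -- overshoot squared
    calc (∫⁻ x, ENNReal.ofReal ((max (S x - 1) 0) ^ 2) ∂μ)
        ≤ ∫⁻ x, ENNReal.ofReal (2 * ε^lam * Eeps γ lam TM ε SD (S x)) ∂μ :=
          lintegral_mono fun x => ENNReal.ofReal_le_ofReal
            (boundC γ lam (by linarith) hTM.le hε hε2 hSDle1 (S x))
      _ = ENNReal.ofReal (∫ x, 2 * ε^lam * Eeps γ lam TM ε SD (S x) ∂μ) :=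
          (ofReal_integral_eq_lintegral_ofReal (hSint.const_mul _)
            (Filter.Eventually.of_forall fun x => mul_nonneg
              (by positivity) (hEnn x))).symm
      _ ≤ ENNReal.ofReal ((2*C0 + C0/c1 + C0/c2) * ε ^ lam) := by
          apply ENNReal.ofReal_le_ofReal
          rw [integral_const_mul]
          have hεl : (0:ℝ) < ε ^ lam := Real.rpow_pos_of_pos hε lam
          have : 2 * ε^lam * (∫ x, Eeps γ lam TM ε SD (S x) ∂μ) ≤ 2 * ε^lam * C0 :=
            mul_le_mul_of_nonneg_left hIE (by positivity)
          have hd1 : 0 < C0/c1 := div_pos hC0 hc1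
          have hd2 : 0 < C0/c2 := div_pos hC0 hc2
          nlinarith
  · -- measure of {1 ≤ S}
    have := markov c2 lam hc2 (fun _ => trivial) {x | 1 ≤ S x}
      (fun x hx => boundD γ lam (by linarith) hTM.le (by linarith) h2 hSD2 hε hε2 hx)
    refine this.trans (ENNReal.ofReal_le_ofReal ?_)
    have hεp : (0:ℝ) ≤ ε ^ (lam-2) := (Real.rpow_pos_of_pos hε _).le
    have hd1 : 0 < C0/c1 := div_pos hC0 hc1
    have hd2 : 0 < C0/c2 := div_pos hC0 hc2
    nlinarith
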